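/- Let T₁ = {v ∈ ℤ⁶ : Q₂(v) ∈ 2ℤ} be the even sublattice of the odd unimodular lattice (ℤ⁶, Q₂), regarded inside ℚ⁶. Then ℤ⁶ is the unique subgroup L of ℚ⁶ satisfying: T₁ ⊆ L, the index [L : T₁] equals 2, and B₂(v,w) ∈ ℤ for all v, w ∈ L. In other words, T₁ has a unique integral overlattice of index 2 inside T₁ ⊗ ℚ, namely ℤ⁶. -/

import Mathlib

def Q2 (v : Fin 6 → ℤ) : ℤ :=
  v 0 ^ 2 + v 1 ^ 2 - v 2 ^ 2 - v 3 ^ 2 - v 4 ^ 2 - v 5 ^ 2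

def B2 (v w : Fin 6 → ℤ) : ℤ :=
  v 0 * w 0 + v 1 * w 1 - v 2 * w 2 - v 3 * w 3 - v 4 * w 4 - v 5 * w 5

def B2Q (v w : Fin 6 → ℚ) : ℚ :=
  v 0 * w 0 + v 1 * w 1 - v 2 * w 2 - v 3 * w 3 - v 4 * w 4 - v 5 * w 5

def T1 : AddSubgroup (Fin 6 → ℤ) where
  carrier := {v | ∃ n : ℤ, Q2 v = 2 * n}
  zero_mem' := ⟨0, by simp [Q2]⟩
  add_mem' := by
    rintro a b ⟨m, hm⟩ ⟨n, hn⟩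
    exact ⟨m + n + B2 a b, by
      simp only [Q2, B2, Pi.add_apply] at *
      linear_combination hm + hn⟩
  neg_mem' := by
    rintro a ⟨n, hn⟩
    exact ⟨n, by
      simp only [Q2, Pi.neg_apply] at *
      linear_combination hn⟩

def castHom : (Fin 6 → ℤ) →+ (Fin 6 → ℚ) where
  toFun v := fun i => (v i : ℚ)
  map_zero' := by funext i; simp
  map_add' a b := by funext i; push_cast; simp

lemma castHom_apply (v : Fin 6 → ℤ) (i : Fin 6) : castHom v i = (v i : ℚ) := rfl

lemma castHom_injective : Function.Injective castHom := by
  intro a b h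
  funext i
  have : (a i : ℚ) = (b i : ℚ) := congrFun h i
  exact_mod_cast this

lemma mem_T1_iff (u : Fin 6 → ℤ) :
    u ∈ T1 ↔ Even (u 0 + u 1 + u 2 + u 3 + u 4 + u 5) := by
  have h1 : (u ∈ T1) ↔ Even (Q2 u) := by
    constructor
    · rintro ⟨n, hn⟩; exact ⟨n, by omega⟩
    · rintro ⟨n, hn⟩; exact ⟨n, by omega⟩
  rw [h1]
  simp only [Q2, Int.even_add, Int.even_sub, Int.even_pow]
  norm_num

lemma mem_map_T1 (u : Fin 6 → ℤ) : castHom u ∈ T1.map castHom ↔ u ∈ T1 := by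
  constructor
  · rintro ⟨w, hw, h⟩
    rwa [← castHom_injective h]
  · exact fun h => ⟨u, h, rfl⟩

/-- standard basis vector -/
def ee (i : Fin 6) : Fin 6 → ℤ := fun j => if j = i then 1 else 0

lemma vec6_five {α : Type*} (a b c d e f : α) : (![a,b,c,d,e,f] : Fin 6 → α) 5 = f := rfl

lemma vec6_two {α : Type*} (a b c d e f : α) : (![a,b,c,d,e,f] : Fin 6 → α) 2 = c := rfl

lemma vec6_three {α : Type*} (a b c d e f : α) : (![a,b,c,d,e,f] : Fin 6 → α) 3 = d := rfl

lemma vec6_four {α : Type*} (a b c d e f : α) : (![a,b,c,d,e,f] : Fin 6 → α) 4 = e := rfl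

lemma odd_sq_mod_four {a : ℤ} (h : a % 2 = 1) : a ^ 2 % 4 = 1 := by
  obtain ⟨k, hk⟩ : ∃ k, a = 2 * k + 1 := ⟨a / 2, by omega⟩
  subst hk
  have : (2 * k + 1) ^ 2 = 4 * (k ^ 2 + k) + 1 := by ring
  omega

lemma xor_even_succ (a b : ℤ) (h : a = b + 1) : Xor' (Even a) (Even b) := by
  subst h
  simp [Xor', Int.even_add_one]
  exact (xor_comm _ _) ▸ Int.even_xor_odd b

/-- `ℤ⁶` is the unique integral overlattice of the even sublattice `T₁` of index 2
inside `T₁ ⊗ ℚ = ℚ⁶`. -/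
theorem unique_integral_overlattice :
    ∀ L : AddSubgroup (Fin 6 → ℚ),
      (T1.map castHom ≤ L ∧
       ((T1.map castHom).addSubgroupOf L).index = 2 ∧
       ∀ v ∈ L, ∀ w ∈ L, ∃ n : ℤ, B2Q v w = n) ↔
      L = castHom.range := by
  intro L
  constructor
  · rintro ⟨hle, hidx, hint⟩
    have hT : ∀ u ∈ T1, castHom u ∈ L := fun u hu => hle ⟨u, hu, rfl⟩
    -- Step A : every element of L is integral
    have hA : ∀ v ∈ L, ∃ u : Fin 6 → ℤ, castHom u = v := by
      intro v hv
      have int_of : ∀ w ∈ T1, ∃ n : ℤ, B2Q v (castHom w) = n :=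
        fun w hw => hint v hv _ (hT _ hw)
      obtain ⟨s1, hs1⟩ := int_of ![1, 1, 0, 0, 0, 0] ⟨1, by decide⟩
      obtain ⟨d1, hd1⟩ := int_of ![1, -1, 0, 0, 0, 0] ⟨1, by decide⟩
      obtain ⟨s2, hs2⟩ := int_of ![1, 0, -1, 0, 0, 0] ⟨0, by decide⟩
      obtain ⟨d2, hd2⟩ := int_of ![1, 0, 1, 0, 0, 0] ⟨0, by decide⟩
      obtain ⟨s3, hs3⟩ := int_of ![1, 0, 0, -1, 0, 0] ⟨0, by decide⟩
      obtain ⟨d3, hd3⟩ := int_of ![1, 0, 0, 1, 0, 0] ⟨0, by decide⟩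
      obtain ⟨s4, hs4⟩ := int_of ![1, 0, 0, 0, -1, 0] ⟨0, by decide⟩
      obtain ⟨d4, hd4⟩ := int_of ![1, 0, 0, 0, 1, 0] ⟨0, by decide⟩
      obtain ⟨s5, hs5⟩ := int_of ![1, 0, 0, 0, 0, -1] ⟨0, by decide⟩
      obtain ⟨d5, hd5⟩ := int_of ![1, 0, 0, 0, 0, 1] ⟨0, by decide⟩
      simp only [B2Q, castHom_apply] at hs1 hd1 hs2 hd2 hs3 hd3 hs4 hd4 hs5 hd5
      norm_num [vec6_five, vec6_two, vec6_three, vec6_four] at hs1 hd1 hs2 hd2 hs3 hd3 hs4 hd4 hs5 hd5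
      -- hs1 : v 0 + v 1 = s1, hd1 : v 0 - v 1 = d1,
      -- hs_i : v 0 + v i = s_i, hd_i : v 0 - v i = d_i for i ≥ 2
      obtain ⟨n, hn⟩ := hint v hv v hv
      simp only [B2Q] at hn
      -- doubled coordinates
      have c0 : ((s1 + d1 : ℤ) : ℚ) = 2 * v 0 := by push_cast; linarith
      have c1 : ((s1 - d1 : ℤ) : ℚ) = 2 * v 1 := by push_cast; linarith
      have c2 : ((s2 - d2 : ℤ) : ℚ) = 2 * v 2 := by push_cast; linarith
      have c3 : ((s3 - d3 : ℤ) : ℚ) = 2 * v 3 := by push_cast; linarith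
      have c4 : ((s4 - d4 : ℤ) : ℚ) = 2 * v 4 := by push_cast; linarith
      have c5 : ((s5 - d5 : ℤ) : ℚ) = 2 * v 5 := by push_cast; linarith
      -- parity links
      have h12 : s1 + d1 = s2 + d2 := by
        have : ((s1 + d1 : ℤ) : ℚ) = ((s2 + d2 : ℤ) : ℚ) := by push_cast; linarith
        exact_mod_cast this
      have h13 : s1 + d1 = s3 + d3 := by
        have : ((s1 + d1 : ℤ) : ℚ) = ((s3 + d3 : ℤ) : ℚ) := by push_cast; linarith
        exact_mod_cast this
      have h14 : s1 + d1 = s4 + d4 := by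
        have : ((s1 + d1 : ℤ) : ℚ) = ((s4 + d4 : ℤ) : ℚ) := by push_cast; linarith
        exact_mod_cast this
      have h15 : s1 + d1 = s5 + d5 := by
        have : ((s1 + d1 : ℤ) : ℚ) = ((s5 + d5 : ℤ) : ℚ) := by push_cast; linarith
        exact_mod_cast this
      -- the quadratic form of the doubled vector is divisible by 4
      have hQ4 : (s1 + d1) ^ 2 + (s1 - d1) ^ 2 - (s2 - d2) ^ 2 - (s3 - d3) ^ 2
          - (s4 - d4) ^ 2 - (s5 - d5) ^ 2 = 4 * n := by
        apply Int.cast_injective (α := ℚ)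
        push_cast
        rw [show ((s1 : ℚ)) = v 0 + v 1 from hs1.symm,
            show ((d1 : ℚ)) = v 0 + -v 1 from hd1.symm,
            show ((s2 : ℚ)) = v 0 + v 2 from hs2.symm,
            show ((d2 : ℚ)) = v 0 - v 2 from hd2.symm,
            show ((s3 : ℚ)) = v 0 + v 3 from hs3.symm,
            show ((d3 : ℚ)) = v 0 - v 3 from hd3.symm,
            show ((s4 : ℚ)) = v 0 + v 4 from hs4.symm,
            show ((d4 : ℚ)) = v 0 - v 4 from hd4.symm,
            show ((s5 : ℚ)) = v 0 + v 5 from hs5.symm,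
            show ((d5 : ℚ)) = v 0 - v 5 from hd5.symm]
        linear_combination 4 * hn
      -- all doubled coordinates are even
      rcases Int.even_or_odd (s1 + d1) with h0 | h0
      · have e0 : (s1 + d1) % 2 = 0 := Int.even_iff.mp h0
        refine ⟨![(s1 + d1) / 2, (s1 - d1) / 2, (s2 - d2) / 2, (s3 - d3) / 2,
            (s4 - d4) / 2, (s5 - d5) / 2], ?_⟩
        funext i
        fin_cases i <;> norm_num [castHom_apply, vec6_five]
        · have h2 : s1 + d1 = 2 * ((s1 + d1) / 2) := by omega
          rw [h2] at c0; push_cast at c0; linarith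
        · have h2 : s1 - d1 = 2 * ((s1 - d1) / 2) := by omega
          rw [h2] at c1; push_cast at c1; linarith
        · show (((s2 - d2) / 2 : ℤ) : ℚ) = v 2
          have h2 : s2 - d2 = 2 * ((s2 - d2) / 2) := by omega
          rw [h2] at c2; push_cast at c2; linarith
        · show (((s3 - d3) / 2 : ℤ) : ℚ) = v 3
          have h2 : s3 - d3 = 2 * ((s3 - d3) / 2) := by omega
          rw [h2] at c3; push_cast at c3; linarith
        · show (((s4 - d4) / 2 : ℤ) : ℚ) = v 4
          have h2 : s4 - d4 = 2 * ((s4 - d4) / 2) := by omega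
          rw [h2] at c4; push_cast at c4; linarith
        · show (((s5 - d5) / 2 : ℤ) : ℚ) = v 5
          have h2 : s5 - d5 = 2 * ((s5 - d5) / 2) := by omega
          rw [h2] at c5; push_cast at c5; linarith
      · exfalso
        have o0 : (s1 + d1) % 2 = 1 := Int.odd_iff.mp h0
        have q0 := odd_sq_mod_four o0
        have q1 := odd_sq_mod_four (a := s1 - d1) (by omega)
        have q2 := odd_sq_mod_four (a := s2 - d2) (by omega)
        have q3 := odd_sq_mod_four (a := s3 - d3) (by omega)
        have q4 := odd_sq_mod_four (a := s4 - d4) (by omega)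
        have q5 := odd_sq_mod_four (a := s5 - d5) (by omega)
        omega
    -- Step B : L contains an odd vector, hence all of ℤ⁶
    have hne : (T1.map castHom).addSubgroupOf L ≠ ⊤ := by
      intro h
      rw [h, AddSubgroup.index_top] at hidx
      omega
    rw [Ne, AddSubgroup.eq_top_iff'] at hne
    push_neg at hne
    obtain ⟨⟨x, hxL⟩, hx⟩ := hne
    rw [AddSubgroup.mem_addSubgroupOf] at hx
    obtain ⟨u0, rfl⟩ := hA x hxL
    have hu0 : u0 ∉ T1 := fun h => hx ⟨u0, h, rfl⟩
    rw [mem_T1_iff, Int.even_iff] at hu0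
    apply le_antisymm
    · intro v hv
      obtain ⟨u, rfl⟩ := hA v hv
      exact ⟨u, rfl⟩
    · rintro v ⟨w, rfl⟩
      rcases Int.even_or_odd (w 0 + w 1 + w 2 + w 3 + w 4 + w 5) with hw | hw
      · exact hT w ((mem_T1_iff w).mpr hw)
      · have hsub : w - u0 ∈ T1 := by
          rw [mem_T1_iff, Int.even_iff]
          simp only [Pi.sub_apply]
          rw [Int.odd_iff] at hw
          omega
        have : castHom w = castHom (w - u0) + castHom u0 := by
          rw [← map_add]
          congr 1
          ring
        rw [this]
        exact add_mem (hT _ hsub) hxL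
  · rintro rfl
    refine ⟨?_, ?_, ?_⟩
    · rintro x ⟨u, _, rfl⟩
      exact ⟨u, rfl⟩
    · rw [AddSubgroup.index_eq_two_iff]
      refine ⟨⟨castHom (ee 0), ⟨ee 0, rfl⟩⟩, ?_⟩
      rintro ⟨b, hb⟩
      obtain ⟨w, rfl⟩ := hb
      have h1 : (⟨castHom w, ⟨w, rfl⟩⟩ + ⟨castHom (ee 0), ⟨ee 0, rfl⟩⟩ : castHom.range) ∈
          (T1.map castHom).addSubgroupOf castHom.range ↔ (w + ee 0) ∈ T1 := by
        rw [AddSubgroup.mem_addSubgroupOf]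
        show castHom w + castHom (ee 0) ∈ _ ↔ _
        rw [← map_add, mem_map_T1]
      have h2 : (⟨castHom w, ⟨w, rfl⟩⟩ : castHom.range) ∈
          (T1.map castHom).addSubgroupOf castHom.range ↔ w ∈ T1 := by
        rw [AddSubgroup.mem_addSubgroupOf]
        exact mem_map_T1 w
      rw [h1, h2, mem_T1_iff, mem_T1_iff]
      have hsum : (w + ee 0) 0 + (w + ee 0) 1 + (w + ee 0) 2 + (w + ee 0) 3 +
          (w + ee 0) 4 + (w + ee 0) 5 = (w 0 + w 1 + w 2 + w 3 + w 4 + w 5) + 1 := by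
        show (w 0 + 1) + (w 1 + 0) + (w 2 + 0) + (w 3 + 0) + (w 4 + 0) + (w 5 + 0) = _
        ring
      rw [hsum]
      exact xor_even_succ _ _ rfl
    · rintro v ⟨a, rfl⟩ w ⟨b, rfl⟩
      refine ⟨B2 a b, ?_⟩
      simp only [B2Q, B2, castHom_apply]
      push_cast
      ring
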